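/- The neural code C = {{2,3,4,5}, {1,2,3}, {1,3,4}, {1,4,5}, {2,3,4}, {3,4,5}, {1,3}, {1,4}, {2,3}, {3,4}, {4,5}, {3}, {4}, ∅} on 5 neurons (obtained by adding the codewords {2,3,4} and {3,4,5} to the code {{2,3,4,5}, {1,2,3}, {1,3,4}, {1,4,5}, {1,3}, {1,4}, {2,3}, {3,4}, {4,5}, {3}, {4}, ∅}) is convex: there exist convex open sets U₁, …, U₅ ⊆ ℝ² that realize C. -/

import Mathlib

/-- The atom of a codeword `σ` with respect to the sets `U i`:
`(⋂ i ∈ σ, U i) \ ⋃ j ∉ σ, U j`. -/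
def codeAtom {n : ℕ} {X : Type*} (U : Fin n → Set X) (σ : Finset (Fin n)) : Set X :=
  (⋂ i ∈ σ, U i) \ ⋃ (j : Fin n) (_ : j ∉ σ), U j

/-- A collection `U` of subsets of `X` realizes the code `C` if `⋃ i, U i ⊊ X` and,
for every nonempty `σ ⊆ [n]`, `σ ∈ C` iff the atom of `σ` is nonempty. -/
def Realizes {n : ℕ} {X : Type*} (U : Fin n → Set X) (C : Set (Finset (Fin n))) : Prop :=
  (⋃ i, U i) ⊂ Set.univ ∧
  ∀ σ : Finset (Fin n), σ.Nonempty → (σ ∈ C ↔ (codeAtom U σ).Nonempty)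

/-- The code obtained by adding the codewords `234` and `345` to the counterexample
code `{2345, 123, 134, 145, 13, 14, 23, 34, 45, 3, 4, ∅}`
(with neurons `1,…,5` encoded as `0,…,4` in `Fin 5`). -/
def augmentedCode : Set (Finset (Fin 5)) :=
  {{1, 2, 3, 4}, {0, 1, 2}, {0, 2, 3}, {0, 3, 4}, {1, 2, 3}, {2, 3, 4},
   {0, 2}, {0, 3}, {1, 2}, {2, 3}, {3, 4}, {2}, {3}, ∅}

abbrev Pt := EuclideanSpace ℝ (Fin 2)

def hp (a b c : ℝ) : Set Pt := {p | a * p 0 + b * p 1 < c}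

lemma convex_hp (a b c : ℝ) : Convex ℝ (hp a b c) := by
  apply convex_halfSpace_lt
  exact ⟨fun x y => by simp [PiLp.add_apply]; ring,
         fun r x => by simp [PiLp.smul_apply, smul_eq_mul]; ring⟩

lemma isOpen_hp (a b c : ℝ) : IsOpen (hp a b c) := by
  apply isOpen_lt _ continuous_const
  exact ((continuous_const.mul ((EuclideanSpace.proj (0 : Fin 2)).continuous)).add
    (continuous_const.mul ((EuclideanSpace.proj (1 : Fin 2)).continuous)))

def pt (a b : ℝ) : Pt := WithLp.toLp 2 ![a, b]

@[simp] lemma pt_zero (a b : ℝ) : pt a b 0 = a := rfl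
@[simp] lemma pt_one (a b : ℝ) : pt a b 1 = b := rfl

def U0 : Set Pt := hp (-1) 0 0 ∩ hp 1 0 100 ∩ hp 0 (-1) (-92) ∩ hp 0 1 98
def U1 : Set Pt := hp (-1) 0 (-10) ∩ hp 1 0 50 ∩ hp 0 (-1) (-10) ∩ hp 0 1 100 ∩ hp 1 2 220
def U2 : Set Pt := hp (-1) 0 0 ∩ hp 1 0 60 ∩ hp 0 (-1) 0 ∩ hp 0 1 100
def U3 : Set Pt := hp (-1) 0 (-40) ∩ hp 1 0 100 ∩ hp 0 (-1) 0 ∩ hp 0 1 100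
def U4 : Set Pt := hp (-1) 0 (-45) ∩ hp 1 0 90 ∩ hp 0 (-1) (-10) ∩ hp 0 1 100 ∩ hp (-1) 2 114

def Uu : Fin 5 → Set Pt := ![U0, U1, U2, U3, U4]

lemma mem_U0 (p : Pt) : p ∈ Uu 0 ↔ (0 < p 0 ∧ p 0 < 100 ∧ 92 < p 1 ∧ p 1 < 98) := by
  simp [Uu, U0, hp, Set.mem_inter_iff, and_assoc]

lemma mem_U1 (p : Pt) :
    p ∈ Uu 1 ↔ (10 < p 0 ∧ p 0 < 50 ∧ 10 < p 1 ∧ p 1 < 100 ∧ p 0 + 2 * p 1 < 220) := by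
  simp [Uu, U1, hp, Set.mem_inter_iff, and_assoc]

lemma mem_U2 (p : Pt) : p ∈ Uu 2 ↔ (0 < p 0 ∧ p 0 < 60 ∧ 0 < p 1 ∧ p 1 < 100) := by
  simp [Uu, U2, hp, Set.mem_inter_iff, and_assoc]

lemma mem_U3 (p : Pt) : p ∈ Uu 3 ↔ (40 < p 0 ∧ p 0 < 100 ∧ 0 < p 1 ∧ p 1 < 100) := by
  simp [Uu, U3, hp, Set.mem_inter_iff, and_assoc]

lemma mem_U4 (p : Pt) :
    p ∈ Uu 4 ↔ (45 < p 0 ∧ p 0 < 90 ∧ 10 < p 1 ∧ p 1 < 100 ∧ 2 * p 1 < p 0 + 114) := by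
  simp [Uu, U4, hp, Set.mem_inter_iff, and_assoc]

lemma mem_codeAtom_iff (p : Pt) (σ : Finset (Fin 5)) :
    p ∈ codeAtom Uu σ ↔ ∀ i : Fin 5, i ∈ σ ↔ p ∈ Uu i := by
  simp only [codeAtom, Set.mem_diff, Set.mem_iInter, Set.mem_iUnion, not_exists]
  constructor
  · rintro ⟨h1, h2⟩ i
    exact ⟨h1 i, fun hpi => by by_contra hi; exact h2 i hi hpi⟩
  · intro h
    exact ⟨fun i hi => (h i).1 hi, fun i hi hpi => hi ((h i).2 hpi)⟩


/-- **Proposition 3.3.** The code obtained by adding the codewords `234` and `345` to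
the counterexample code is convex: it has a realization by convex open sets in `ℝ²`. -/
theorem augmentedCode_convex :
    ∃ U : Fin 5 → Set (EuclideanSpace ℝ (Fin 2)),
      (∀ i, Convex ℝ (U i)) ∧ (∀ i, IsOpen (U i)) ∧ Realizes U augmentedCode := by
  refine ⟨Uu, ?_, ?_, ?_, ?_⟩
  · intro i
    fin_cases i
    · exact (((convex_hp _ _ _).inter (convex_hp _ _ _)).inter (convex_hp _ _ _)).inter (convex_hp _ _ _)
    · exact ((((convex_hp _ _ _).inter (convex_hp _ _ _)).inter (convex_hp _ _ _)).inter (convex_hp _ _ _)).inter (convex_hp _ _ _)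
    · exact (((convex_hp _ _ _).inter (convex_hp _ _ _)).inter (convex_hp _ _ _)).inter (convex_hp _ _ _)
    · exact (((convex_hp _ _ _).inter (convex_hp _ _ _)).inter (convex_hp _ _ _)).inter (convex_hp _ _ _)
    · exact ((((convex_hp _ _ _).inter (convex_hp _ _ _)).inter (convex_hp _ _ _)).inter (convex_hp _ _ _)).inter (convex_hp _ _ _)
  · intro i
    fin_cases i
    · exact (((isOpen_hp _ _ _).inter (isOpen_hp _ _ _)).inter (isOpen_hp _ _ _)).inter (isOpen_hp _ _ _)
    · exact ((((isOpen_hp _ _ _).inter (isOpen_hp _ _ _)).inter (isOpen_hp _ _ _)).inter (isOpen_hp _ _ _)).inter (isOpen_hp _ _ _)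
    · exact (((isOpen_hp _ _ _).inter (isOpen_hp _ _ _)).inter (isOpen_hp _ _ _)).inter (isOpen_hp _ _ _)
    · exact (((isOpen_hp _ _ _).inter (isOpen_hp _ _ _)).inter (isOpen_hp _ _ _)).inter (isOpen_hp _ _ _)
    · exact ((((isOpen_hp _ _ _).inter (isOpen_hp _ _ _)).inter (isOpen_hp _ _ _)).inter (isOpen_hp _ _ _)).inter (isOpen_hp _ _ _)
  · -- union is a proper subset of univ
    refine Set.ssubset_univ_iff.2 fun h => ?_
    have hmem : pt 200 0 ∈ ⋃ i, Uu i := h ▸ Set.mem_univ _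
    rw [Set.mem_iUnion] at hmem
    obtain ⟨i, hi⟩ := hmem
    fin_cases i
    · exact (by norm_num [mem_U0] : pt 200 0 ∉ Uu 0) hi
    · exact (by norm_num [mem_U1] : pt 200 0 ∉ Uu 1) hi
    · exact (by norm_num [mem_U2] : pt 200 0 ∉ Uu 2) hi
    · exact (by norm_num [mem_U3] : pt 200 0 ∉ Uu 3) hi
    · exact (by norm_num [mem_U4] : pt 200 0 ∉ Uu 4) hi
  · intro σ hne
    constructor
    · -- forward: each codeword has a witness point
      intro hC
      simp only [augmentedCode, Set.mem_insert_iff, Set.mem_singleton_iff] at hC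
      rcases hC with rfl | rfl | rfl | rfl | rfl | rfl | rfl | rfl | rfl | rfl | rfl | rfl | rfl | rfl
      · exact ⟨pt 47 50, (mem_codeAtom_iff _ _).2 (by intro i; fin_cases i <;>
          simp [mem_U0, mem_U1, mem_U2, mem_U3, mem_U4] <;> norm_num)⟩
      · exact ⟨pt 20 95, (mem_codeAtom_iff _ _).2 (by intro i; fin_cases i <;>
          simp [mem_U0, mem_U1, mem_U2, mem_U3, mem_U4] <;> norm_num)⟩
      · exact ⟨pt 50 95, (mem_codeAtom_iff _ _).2 (by intro i; fin_cases i <;>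
          simp [mem_U0, mem_U1, mem_U2, mem_U3, mem_U4] <;> norm_num)⟩
      · exact ⟨pt 80 95, (mem_codeAtom_iff _ _).2 (by intro i; fin_cases i <;>
          simp [mem_U0, mem_U1, mem_U2, mem_U3, mem_U4] <;> norm_num)⟩
      · exact ⟨pt 42 50, (mem_codeAtom_iff _ _).2 (by intro i; fin_cases i <;>
          simp [mem_U0, mem_U1, mem_U2, mem_U3, mem_U4] <;> norm_num)⟩
      · exact ⟨pt 55 50, (mem_codeAtom_iff _ _).2 (by intro i; fin_cases i <;>
          simp [mem_U0, mem_U1, mem_U2, mem_U3, mem_U4] <;> norm_num)⟩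
      · exact ⟨pt 5 95, (mem_codeAtom_iff _ _).2 (by intro i; fin_cases i <;>
          simp [mem_U0, mem_U1, mem_U2, mem_U3, mem_U4] <;> norm_num)⟩
      · exact ⟨pt 65 95, (mem_codeAtom_iff _ _).2 (by intro i; fin_cases i <;>
          simp [mem_U0, mem_U1, mem_U2, mem_U3, mem_U4] <;> norm_num)⟩
      · exact ⟨pt 20 50, (mem_codeAtom_iff _ _).2 (by intro i; fin_cases i <;>
          simp [mem_U0, mem_U1, mem_U2, mem_U3, mem_U4] <;> norm_num)⟩
      · exact ⟨pt 55 90, (mem_codeAtom_iff _ _).2 (by intro i; fin_cases i <;>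
          simp [mem_U0, mem_U1, mem_U2, mem_U3, mem_U4] <;> norm_num)⟩
      · exact ⟨pt 70 50, (mem_codeAtom_iff _ _).2 (by intro i; fin_cases i <;>
          simp [mem_U0, mem_U1, mem_U2, mem_U3, mem_U4] <;> norm_num)⟩
      · exact ⟨pt 5 50, (mem_codeAtom_iff _ _).2 (by intro i; fin_cases i <;>
          simp [mem_U0, mem_U1, mem_U2, mem_U3, mem_U4] <;> norm_num)⟩
      · exact ⟨pt 95 50, (mem_codeAtom_iff _ _).2 (by intro i; fin_cases i <;>
          simp [mem_U0, mem_U1, mem_U2, mem_U3, mem_U4] <;> norm_num)⟩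
      · exact absurd hne (by simp)
    · -- backward: every point's support is a codeword
      rintro ⟨p, hpA⟩
      have h := (mem_codeAtom_iff p σ).1 hpA
      have g12 : p ∈ Uu 1 → p ∈ Uu 2 := by
        rw [mem_U1, mem_U2]; rintro ⟨a, b, c, d, e⟩
        exact ⟨by linarith, by linarith, by linarith, by linarith⟩
      have g43 : p ∈ Uu 4 → p ∈ Uu 3 := by
        rw [mem_U4, mem_U3]; rintro ⟨a, b, c, d, e⟩
        exact ⟨by linarith, by linarith, by linarith, by linarith⟩
      have g023 : p ∈ Uu 0 → p ∈ Uu 2 ∨ p ∈ Uu 3 := by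
        rw [mem_U0, mem_U2, mem_U3]; rintro ⟨a, b, c, d⟩
        rcases lt_or_ge (p 0) 60 with hx | hx
        · exact Or.inl ⟨by linarith, by linarith, by linarith, by linarith⟩
        · exact Or.inr ⟨by linarith, by linarith, by linarith, by linarith⟩
      have g013 : p ∈ Uu 0 → p ∈ Uu 1 → p ∈ Uu 3 → False := by
        rw [mem_U0, mem_U1, mem_U3]
        rintro ⟨a, b, c, d⟩ ⟨e, f, g, i, j⟩ ⟨k, l, m, o⟩
        linarith
      have g024 : p ∈ Uu 0 → p ∈ Uu 2 → p ∈ Uu 4 → False := by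
        rw [mem_U0, mem_U2, mem_U4]
        rintro ⟨a, b, c, d⟩ ⟨e, f, g, i⟩ ⟨j, k, l, m, o⟩
        linarith
      by_cases h0 : p ∈ Uu 0 <;> by_cases h1 : p ∈ Uu 1 <;> by_cases h2 : p ∈ Uu 2 <;>
        by_cases h3 : p ∈ Uu 3 <;> by_cases h4 : p ∈ Uu 4
      all_goals try exact absurd (g12 h1) h2
      all_goals try exact absurd (g43 h4) h3
      all_goals try exact (g023 h0).elim (fun c => absurd c h2) (fun c => absurd c h3)
      all_goals try exact (g013 h0 h1 h3).elim
      all_goals try exact (g024 h0 h2 h4).elim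
      · have e : σ = ({0, 1, 2} : Finset (Fin 5)) := by
          ext j; fin_cases j <;> simp [h, h0, h1, h2, h3, h4]
        rw [e]
        exact Or.inr (Or.inl rfl)
      · have e : σ = ({0, 2, 3} : Finset (Fin 5)) := by
          ext j; fin_cases j <;> simp [h, h0, h1, h2, h3, h4]
        rw [e]
        exact Or.inr (Or.inr (Or.inl rfl))
      · have e : σ = ({0, 2} : Finset (Fin 5)) := by
          ext j; fin_cases j <;> simp [h, h0, h1, h2, h3, h4]
        rw [e]
        exact Or.inr (Or.inr (Or.inr (Or.inr (Or.inr (Or.inr (Or.inl rfl))))))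
      · have e : σ = ({0, 3, 4} : Finset (Fin 5)) := by
          ext j; fin_cases j <;> simp [h, h0, h1, h2, h3, h4]
        rw [e]
        exact Or.inr (Or.inr (Or.inr (Or.inl rfl)))
      · have e : σ = ({0, 3} : Finset (Fin 5)) := by
          ext j; fin_cases j <;> simp [h, h0, h1, h2, h3, h4]
        rw [e]
        exact Or.inr (Or.inr (Or.inr (Or.inr (Or.inr (Or.inr (Or.inr (Or.inl rfl)))))))
      · have e : σ = ({1, 2, 3, 4} : Finset (Fin 5)) := by
          ext j; fin_cases j <;> simp [h, h0, h1, h2, h3, h4]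
        rw [e]
        exact Or.inl rfl
      · have e : σ = ({1, 2, 3} : Finset (Fin 5)) := by
          ext j; fin_cases j <;> simp [h, h0, h1, h2, h3, h4]
        rw [e]
        exact Or.inr (Or.inr (Or.inr (Or.inr (Or.inl rfl))))
      · have e : σ = ({1, 2} : Finset (Fin 5)) := by
          ext j; fin_cases j <;> simp [h, h0, h1, h2, h3, h4]
        rw [e]
        exact Or.inr (Or.inr (Or.inr (Or.inr (Or.inr (Or.inr (Or.inr (Or.inr (Or.inl rfl))))))))
      · have e : σ = ({2, 3, 4} : Finset (Fin 5)) := by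
          ext j; fin_cases j <;> simp [h, h0, h1, h2, h3, h4]
        rw [e]
        exact Or.inr (Or.inr (Or.inr (Or.inr (Or.inr (Or.inl rfl)))))
      · have e : σ = ({2, 3} : Finset (Fin 5)) := by
          ext j; fin_cases j <;> simp [h, h0, h1, h2, h3, h4]
        rw [e]
        exact Or.inr (Or.inr (Or.inr (Or.inr (Or.inr (Or.inr (Or.inr (Or.inr (Or.inr (Or.inl rfl)))))))))
      · have e : σ = ({2} : Finset (Fin 5)) := by
          ext j; fin_cases j <;> simp [h, h0, h1, h2, h3, h4]
        rw [e]
        exact Or.inr (Or.inr (Or.inr (Or.inr (Or.inr (Or.inr (Or.inr (Or.inr (Or.inr (Or.inr (Or.inr (Or.inl rfl)))))))))))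
      · have e : σ = ({3, 4} : Finset (Fin 5)) := by
          ext j; fin_cases j <;> simp [h, h0, h1, h2, h3, h4]
        rw [e]
        exact Or.inr (Or.inr (Or.inr (Or.inr (Or.inr (Or.inr (Or.inr (Or.inr (Or.inr (Or.inr (Or.inl rfl))))))))))
      · have e : σ = ({3} : Finset (Fin 5)) := by
          ext j; fin_cases j <;> simp [h, h0, h1, h2, h3, h4]
        rw [e]
        exact Or.inr (Or.inr (Or.inr (Or.inr (Or.inr (Or.inr (Or.inr (Or.inr (Or.inr (Or.inr (Or.inr (Or.inr (Or.inl rfl))))))))))))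
      · obtain ⟨j, hj⟩ := hne
        exact absurd ((h j).1 hj) (by fin_cases j <;> assumption)
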